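/- There is an absolute constant C' > 0 such that the following holds for all n ≥ 2. Let v, p ∈ ℝ^n with ‖p‖_∞ ≤ 1/2, let v = ∑_{j∈J} v^{(j)} be the binary decomposition of v, let r ≥ 0 be an integer, and let α > 0 be such that there are at least 2r·log(n) elements j ∈ J with 2^{-j-1} ≥ α. Then the Lévy concentration function of the biased linear form satisfies Q(α, X_{v,p}) ≤ C' · 2^{-r}. -/

import Mathlib

open MeasureTheory
open scoped Classical

/-- The biased product measure `μ_p` on `{-1,1}^n ⊂ ℝ^n`: coordinates are independent,
with `Pr[x i = 1] = (1 + p i)/2` and `Pr[x i = -1] = (1 - p i)/2`. -/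
noncomputable def cubeMeasure {n : ℕ} (p : Fin n → ℝ) : Measure (Fin n → ℝ) :=
  Measure.pi fun i =>
    ENNReal.ofReal ((1 + p i) / 2) • Measure.dirac (1 : ℝ) +
      ENNReal.ofReal ((1 - p i) / 2) • Measure.dirac (-1 : ℝ)

/-- The Lévy concentration function `Q(α, X_{v,p}) = sup_t Pr_{x ~ μ_p}[|⟨v,x⟩ - t| < α]`
of the biased linear form `X_{v,p} = ⟨v, x⟩`, `x ~ μ_p`. -/
noncomputable def levyQLinForm {n : ℕ} (v p : Fin n → ℝ) (α : ℝ) : ENNReal :=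
  ⨆ t : ℝ, cubeMeasure p {x | |(∑ i, v i * x i) - t| < α}

/-- The dyadic class `K(j)` of the binary decomposition of `v`: the set of coordinates
`k` with `2^{-j-1} < |v k| ≤ 2^{-j}`. -/
noncomputable def binClass {n : ℕ} (v : Fin n → ℝ) (j : ℤ) : Finset (Fin n) :=
  Finset.univ.filter fun k => (2 : ℝ) ^ (-j - 1) < |v k| ∧ |v k| ≤ (2 : ℝ) ^ (-j)

/-- The index set `J` of the binary decomposition of `v`: those `j` with `K(j) ≠ ∅`. -/
def binIdx {n : ℕ} (v : Fin n → ℝ) : Set ℤ := {j | (binClass v j).Nonempty}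

/-! ### Auxiliary definitions and lemmas -/

noncomputable def wgt {n : ℕ} (p : Fin n → ℝ) (i : Fin n) (b : Bool) : ENNReal :=
  if b then ENNReal.ofReal ((1 + p i) / 2) else ENNReal.ofReal ((1 - p i) / 2)

noncomputable def sgn (b : Bool) : ℝ := if b then 1 else -1

lemma cubeMeasure_eq_sum {n : ℕ} (p : Fin n → ℝ) :
    cubeMeasure p =
      ∑ ε : Fin n → Bool, (∏ i, wgt p i (ε i)) • Measure.dirac (fun i => sgn (ε i)) := by
  haveI : ∀ i : Fin n, IsFiniteMeasure (ENNReal.ofReal ((1 + p i) / 2) • Measure.dirac (1:ℝ) +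
      ENNReal.ofReal ((1 - p i) / 2) • Measure.dirac (-1:ℝ)) := by
    intro i
    haveI : IsFiniteMeasure (ENNReal.ofReal ((1 + p i) / 2) • Measure.dirac (1:ℝ)) :=
      ⟨by simp [ENNReal.ofReal_lt_top]⟩
    haveI : IsFiniteMeasure (ENNReal.ofReal ((1 - p i) / 2) • Measure.dirac (-1:ℝ)) :=
      ⟨by simp [ENNReal.ofReal_lt_top]⟩
    infer_instance
  refine Measure.pi_eq fun s hs => ?_
  have hd : ∀ (x : Fin n → ℝ), Measure.dirac x (Set.univ.pi s) = Set.indicator (Set.univ.pi s) 1 x :=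
    fun x => Measure.dirac_apply' x (MeasurableSet.univ_pi hs)
  simp only [Measure.coe_finset_sum, Finset.sum_apply, Measure.smul_apply, smul_eq_mul, hd]
  have key : ∀ ε : Fin n → Bool,
      Set.indicator (Set.univ.pi s) (1 : (Fin n → ℝ) → ENNReal) (fun i => sgn (ε i))
        = ∏ i, (if sgn (ε i) ∈ s i then (1:ENNReal) else 0) := by
    intro ε
    rw [Finset.prod_boole]
    by_cases h : (fun i => sgn (ε i)) ∈ Set.univ.pi s
    · rw [Set.indicator_of_mem h]
      simp only [Set.mem_univ_pi] at h
      simp [h]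
    · rw [Set.indicator_of_notMem h]
      simp only [Set.mem_univ_pi] at h
      simp only [Finset.mem_univ, forall_true_left]
      rw [if_neg h]
  calc ∑ ε : Fin n → Bool, (∏ i, wgt p i (ε i)) *
        Set.indicator (Set.univ.pi s) 1 (fun i => sgn (ε i))
      = ∑ ε : Fin n → Bool, ∏ i, (wgt p i (ε i) * (if sgn (ε i) ∈ s i then 1 else 0)) := by
        refine Finset.sum_congr rfl fun ε _ => ?_
        rw [key ε, Finset.prod_mul_distrib]
    _ = ∏ i, ∑ b : Bool, (wgt p i b * (if sgn b ∈ s i then 1 else 0)) := by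
        rw [Finset.prod_univ_sum]
        rfl
    _ = ∏ i : Fin n, (ENNReal.ofReal ((1 + p i) / 2) • Measure.dirac (1:ℝ) +
          ENNReal.ofReal ((1 - p i) / 2) • Measure.dirac (-1:ℝ)) (s i) := by
        refine Finset.prod_congr rfl fun i _ => ?_
        rw [Measure.add_apply, Measure.smul_apply, Measure.smul_apply,
          Measure.dirac_apply' _ (hs i), Measure.dirac_apply' _ (hs i)]
        simp [wgt, sgn, Fintype.sum_bool, Set.indicator_apply, mul_ite, mul_one, mul_zero]

lemma wgt_le {n : ℕ} (p : Fin n → ℝ) (hp : ∀ i, |p i| ≤ 1/2) (i : Fin n) (b : Bool) :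
    wgt p i b ≤ ENNReal.ofReal (3/4) := by
  have h := abs_le.1 (hp i)
  unfold wgt
  split <;> exact ENNReal.ofReal_le_ofReal (by linarith [h.1, h.2])

lemma wgt_sum {n : ℕ} (p : Fin n → ℝ) (hp : ∀ i, |p i| ≤ 1/2) (i : Fin n) :
    wgt p i true + wgt p i false = 1 := by
  have h := abs_le.1 (hp i)
  unfold wgt
  simp only [if_true, if_false, Bool.false_eq_true]
  rw [← ENNReal.ofReal_add (by linarith [h.1]) (by linarith [h.2])]
  rw [show (1 + p i)/2 + (1 - p i)/2 = 1 by ring, ENNReal.ofReal_one]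

lemma sum_good_le {n : ℕ} (p : Fin n → ℝ) (hp : ∀ i, |p i| ≤ 1/2)
    (G : Finset (Fin n → Bool)) (T : Finset (Fin n))
    (huniq : ∀ ε ∈ G, ∀ τ ∈ G, (∀ i ∉ T, ε i = τ i) → ε = τ) :
    ∑ ε ∈ G, ∏ i, wgt p i (ε i) ≤ ENNReal.ofReal (3/4) ^ T.card := by
  set W : Fin n → Bool → ENNReal :=
    fun i b => if i ∈ T then (if b then 0 else 1) else wgt p i b with hW
  set φ : (Fin n → Bool) → (Fin n → Bool) :=
    fun ε i => if i ∈ T then false else ε i with hφ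
  have step1 : ∀ ε : Fin n → Bool,
      ∏ i, wgt p i (ε i) ≤ ENNReal.ofReal (3/4) ^ T.card * ∏ i, W i (φ ε i) := by
    intro ε
    have hsplit : ∏ i, wgt p i (ε i) = (∏ i ∈ T, wgt p i (ε i)) * ∏ i ∈ Tᶜ, wgt p i (ε i) :=
      (Finset.prod_mul_prod_compl T _).symm
    have h1 : ∏ i ∈ T, wgt p i (ε i) ≤ ENNReal.ofReal (3/4) ^ T.card := by
      rw [← Finset.prod_const]
      exact Finset.prod_le_prod' fun i _ => wgt_le p hp i (ε i)
    have h2 : ∏ i, W i (φ ε i) = ∏ i ∈ Tᶜ, wgt p i (ε i) := by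
      rw [← Finset.prod_mul_prod_compl T (fun i => W i (φ ε i))]
      have hT1 : ∏ i ∈ T, W i (φ ε i) = 1 := by
        refine Finset.prod_eq_one fun i hi => ?_
        simp [hW, hφ, hi]
      rw [hT1, one_mul]
      refine Finset.prod_congr rfl fun i hi => ?_
      have hi' : i ∉ T := Finset.mem_compl.1 hi
      simp [hW, hφ, hi']
    rw [hsplit, h2]
    exact mul_le_mul' h1 le_rfl
  calc ∑ ε ∈ G, ∏ i, wgt p i (ε i)
      ≤ ∑ ε ∈ G, ENNReal.ofReal (3/4) ^ T.card * ∏ i, W i (φ ε i) :=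
        Finset.sum_le_sum fun ε _ => step1 ε
    _ = ENNReal.ofReal (3/4) ^ T.card * ∑ ε ∈ G, ∏ i, W i (φ ε i) := by
        rw [Finset.mul_sum]
    _ ≤ ENNReal.ofReal (3/4) ^ T.card * 1 := by
        refine mul_le_mul' le_rfl ?_
        have hinj : Set.InjOn φ G := by
          intro ε hε τ hτ h
          refine huniq ε hε τ hτ fun i hi => ?_
          have := congrFun h i
          simpa [hφ, hi] using this
        calc ∑ ε ∈ G, ∏ i, W i (φ ε i)
            = ∑ h ∈ G.image φ, ∏ i, W i (h i) := by
              rw [Finset.sum_image (fun a ha b hb hab => hinj ha hb hab)]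
          _ ≤ ∑ h : Fin n → Bool, ∏ i, W i (h i) :=
              Finset.sum_le_sum_of_subset (Finset.subset_univ _)
          _ = ∏ i, ∑ b : Bool, W i b := by
              rw [Finset.prod_univ_sum]; rfl
          _ = 1 := by
              refine Finset.prod_eq_one fun i _ => ?_
              rw [Fintype.sum_bool]
              by_cases hi : i ∈ T
              · simp [hW, hi]
              · simpa [hW, hi] using wgt_sum p hp i
    _ = ENNReal.ofReal (3/4) ^ T.card := mul_one _

lemma cubeMeasure_apply_le {n : ℕ} (p : Fin n → ℝ) (hp : ∀ i, |p i| ≤ 1/2)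
    (A : Set (Fin n → ℝ)) (hA : MeasurableSet A) (T : Finset (Fin n))
    (huniq : ∀ ε τ : Fin n → Bool, (fun i => sgn (ε i)) ∈ A → (fun i => sgn (τ i)) ∈ A →
      (∀ i ∉ T, ε i = τ i) → ε = τ) :
    cubeMeasure p A ≤ ENNReal.ofReal (3/4) ^ T.card := by
  rw [cubeMeasure_eq_sum]
  have h1 : (∑ ε : Fin n → Bool, (∏ i, wgt p i (ε i)) • Measure.dirac (fun i => sgn (ε i))) A
      = ∑ ε : Fin n → Bool, (∏ i, wgt p i (ε i)) *
          (if (fun i => sgn (ε i)) ∈ A then 1 else 0) := by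
    simp only [Measure.coe_finset_sum, Finset.sum_apply, Measure.smul_apply, smul_eq_mul]
    refine Finset.sum_congr rfl fun ε _ => ?_
    rw [Measure.dirac_apply' _ hA, Set.indicator_apply]
    rfl
  rw [h1]
  set G := Finset.univ.filter (fun ε : Fin n → Bool => (fun i => sgn (ε i)) ∈ A) with hG
  have h2 : ∑ ε : Fin n → Bool, (∏ i, wgt p i (ε i)) *
      (if (fun i => sgn (ε i)) ∈ A then 1 else 0) = ∑ ε ∈ G, ∏ i, wgt p i (ε i) := by
    rw [Finset.sum_filter]
    refine Finset.sum_congr rfl fun ε _ => ?_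
    by_cases h : (fun i => sgn (ε i)) ∈ A <;> simp [h]
  rw [h2]
  refine sum_good_le p hp G T fun ε hε τ hτ hag => ?_
  exact huniq ε τ (Finset.mem_filter.1 hε).2 (Finset.mem_filter.1 hτ).2 hag

lemma cubeMeasure_univ {n : ℕ} (p : Fin n → ℝ) (hp : ∀ i, |p i| ≤ 1/2) :
    cubeMeasure p Set.univ = 1 := by
  rw [cubeMeasure_eq_sum]
  simp only [Measure.coe_finset_sum, Finset.sum_apply, Measure.smul_apply, smul_eq_mul,
    measure_univ, mul_one, MeasurableSet.univ, Measure.dirac_apply_of_mem (Set.mem_univ _)]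
  calc ∑ ε : Fin n → Bool, ∏ i, wgt p i (ε i)
      = ∏ i : Fin n, ∑ b : Bool, wgt p i b := by rw [Finset.prod_univ_sum]; rfl
    _ = 1 := by
        refine Finset.prod_eq_one fun i _ => ?_
        rw [Fintype.sum_bool]
        exact wgt_sum p hp i

lemma geom_sum_le : ∀ (F : Finset ℤ), (∀ a ∈ F, ∀ b ∈ F, a < b → a + 3 ≤ b) →
    ∀ m0 : ℤ, (∀ j ∈ F, m0 ≤ j) → ∑ j ∈ F, (2:ℝ) ^ (-j) ≤ (8/7) * (2:ℝ) ^ (-m0) := by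
  intro F
  induction F using Finset.strongInduction with
  | _ F ih =>
    intro hsp m0 hm
    rcases F.eq_empty_or_nonempty with h | hne
    · subst h; simp; positivity
    · set a := F.min' hne with ha
      have haF : a ∈ F := F.min'_mem hne
      have hsum : ∑ j ∈ F, (2:ℝ) ^ (-j) = (2:ℝ)^(-a) + ∑ j ∈ F.erase a, (2:ℝ)^(-j) :=
        (Finset.add_sum_erase F _ haF).symm
      have hsub : F.erase a ⊂ F := Finset.erase_ssubset haF
      have ih' := ih (F.erase a) hsub
        (fun x hx y hy hxy => hsp x (Finset.mem_of_mem_erase hx) y (Finset.mem_of_mem_erase hy) hxy)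
        (a + 3)
        (fun j hj => by
          have hjF := Finset.mem_of_mem_erase hj
          have hne' : j ≠ a := Finset.ne_of_mem_erase hj
          exact hsp a haF j hjF (lt_of_le_of_ne (F.min'_le j hjF) (Ne.symm hne')))
      have h2 : (2:ℝ)^(-(a+3)) = (2:ℝ)^(-a) / 8 := by
        rw [show -(a+3) = -a + (-3) by ring, zpow_add₀ (by norm_num : (2:ℝ) ≠ 0),
          show ((2:ℝ))^(-3:ℤ) = 1/8 by norm_num]
        ring
      have hma : (2:ℝ)^(-a) ≤ (2:ℝ)^(-m0) := by
        apply zpow_le_zpow_right₀ (by norm_num : (1:ℝ) ≤ 2)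
        have := hm a haF; omega
      rw [hsum]
      calc (2:ℝ)^(-a) + ∑ j ∈ F.erase a, (2:ℝ)^(-j)
          ≤ (2:ℝ)^(-a) + (8/7) * ((2:ℝ)^(-a)/8) := by rw [← h2]; linarith [ih']
        _ = (8/7) * (2:ℝ)^(-a) := by ring
        _ ≤ (8/7) * (2:ℝ)^(-m0) := by linarith [hma]

lemma strictMono_int_gap {m : ℕ} (g : Fin m → ℤ) (hg : StrictMono g) :
    ∀ (d : ℕ) (a b : Fin m), a.val + d ≤ b.val → g a + d ≤ g b := by
  intro d
  induction d with
  | zero => intro a b h; simpa using hg.monotone (by omega : a ≤ b)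
  | succ d ihd =>
    intro a b h
    have hb1 : (b.val - 1) < m := by omega
    set b' : Fin m := ⟨b.val - 1, hb1⟩ with hb'
    have h1 : a.val + d ≤ b'.val := by simp [hb']; omega
    have h2 : g b' < g b := hg (by simp [Fin.lt_def, hb']; omega)
    have := ihd a b' h1
    push_cast
    omega

lemma exists_spaced_subset (S : Finset ℤ) :
    ∃ S' : Finset ℤ, S' ⊆ S ∧ S'.card = (S.card + 2) / 3 ∧
      ∀ a ∈ S', ∀ b ∈ S', a < b → a + 3 ≤ b := by
  set m := S.card with hm
  set c := (m + 2) / 3 with hc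
  have h3k : ∀ k : Fin c, 3 * k.val < m := fun k => by
    have := k.2; omega
  set f := S.orderIsoOfFin rfl with hf
  set g : Fin c → ℤ := fun k => (f ⟨3 * k.val, h3k k⟩ : ℤ) with hg
  have hfmono : StrictMono (fun x : Fin m => (f x : ℤ)) := fun a b h => by
    exact_mod_cast f.strictMono h
  have hgap := strictMono_int_gap (fun x : Fin m => (f x : ℤ)) hfmono
  have hginj : Function.Injective g := by
    intro a b hab
    have : (⟨3 * a.val, h3k a⟩ : Fin m) = ⟨3 * b.val, h3k b⟩ := by
      apply f.injective
      exact Subtype.coe_injective hab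
    have := Fin.mk.injEq (3*a.val) (h3k a) (3*b.val) (h3k b) ▸ this
    apply Fin.ext
    omega
  refine ⟨Finset.image g Finset.univ, ?_, ?_, ?_⟩
  · intro x hx
    rcases Finset.mem_image.1 hx with ⟨k, _, rfl⟩
    exact (f ⟨3 * k.val, h3k k⟩).2
  · rw [Finset.card_image_of_injective _ hginj, Finset.card_univ, Fintype.card_fin]
  · intro a ha b hb hab
    rcases Finset.mem_image.1 ha with ⟨ka, _, rfl⟩
    rcases Finset.mem_image.1 hb with ⟨kb, _, rfl⟩
    have hkk : ka.val < kb.val := by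
      by_contra h
      push_neg at h
      have : (g kb : ℤ) ≤ g ka := by
        rcases eq_or_lt_of_le h with h' | h'
        · rw [hginj.eq_iff.2 (Fin.ext h'.symm)]
        · exact le_of_lt (hfmono (Fin.mk_lt_mk.2 (by omega)))
      omega
    have := hgap 3 ⟨3 * ka.val, h3k ka⟩ ⟨3 * kb.val, h3k kb⟩ (by dsimp; omega)
    exact_mod_cast this

lemma binClass_disjoint {n : ℕ} (v : Fin n → ℝ) {i : Fin n} {j j' : ℤ}
    (h : i ∈ binClass v j) (h' : i ∈ binClass v j') : j = j' := by
  simp only [binClass, Finset.mem_filter, Finset.mem_univ, true_and] at h h'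
  have key : ∀ a b : ℤ, (2:ℝ)^(-a-1) < |v i| → |v i| ≤ (2:ℝ)^(-b) → b ≤ a := by
    intro a b h1 h2
    have : (2:ℝ)^(-a-1) < (2:ℝ)^(-b) := lt_of_lt_of_le h1 h2
    have := (zpow_lt_zpow_iff_right₀ (by norm_num : (1:ℝ) < 2)).1 this
    omega
  exact le_antisymm (key j' j h'.1 h.2) (key j j' h.1 h'.2)

lemma uniq_on_window {n : ℕ} (v : Fin n → ℝ) (α t : ℝ) (S' : Finset ℤ)
    (hsp : ∀ a ∈ S', ∀ b ∈ S', a < b → a + 3 ≤ b)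
    (hα : ∀ j ∈ S', α ≤ (2:ℝ) ^ (-j - 1))
    (k : ℤ → Fin n) (hk : ∀ j ∈ S', k j ∈ binClass v j) (hkinj : Set.InjOn k S')
    (ε τ : Fin n → Bool)
    (hε : |(∑ i, v i * sgn (ε i)) - t| < α) (hτ : |(∑ i, v i * sgn (τ i)) - t| < α)
    (hagree : ∀ i ∉ S'.image k, ε i = τ i) : ε = τ := by
  by_contra hne
  set E : Finset ℤ := S'.filter (fun j => ε (k j) ≠ τ (k j)) with hE
  have hES' : E ⊆ S' := Finset.filter_subset _ _
  have hEne : E.Nonempty := by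
    rcases Function.ne_iff.1 hne with ⟨i, hi⟩
    have hiT : i ∈ S'.image k := by
      by_contra h; exact hi (hagree i h)
    rcases Finset.mem_image.1 hiT with ⟨j, hj, rfl⟩
    exact ⟨j, Finset.mem_filter.2 ⟨hj, hi⟩⟩
  set Δ : ℝ := (∑ i, v i * sgn (ε i)) - (∑ i, v i * sgn (τ i)) with hΔ
  have hΔlt : |Δ| < 2 * α := by
    calc |Δ| = |((∑ i, v i * sgn (ε i)) - t) - ((∑ i, v i * sgn (τ i)) - t)| := by rw [hΔ]; congr 1; ring
      _ ≤ |(∑ i, v i * sgn (ε i)) - t| + |(∑ i, v i * sgn (τ i)) - t| := abs_sub _ _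
      _ < 2 * α := by linarith
  set c : ℤ → ℝ := fun j => v (k j) * (sgn (ε (k j)) - sgn (τ (k j))) with hc
  have hΔeq : Δ = ∑ j ∈ E, c j := by
    have h1 : Δ = ∑ i, v i * (sgn (ε i) - sgn (τ i)) := by
      rw [hΔ, ← Finset.sum_sub_distrib]
      refine Finset.sum_congr rfl fun i _ => by ring
    rw [h1]
    have h2 : ∑ i, v i * (sgn (ε i) - sgn (τ i))
        = ∑ i ∈ E.image k, v i * (sgn (ε i) - sgn (τ i)) := by
      refine (Finset.sum_subset (Finset.subset_univ _) ?_).symm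
      intro i _ hiT
      have : ε i = τ i := by
        by_cases h : i ∈ S'.image k
        · rcases Finset.mem_image.1 h with ⟨j, hj, rfl⟩
          by_contra hc'
          exact hiT (Finset.mem_image.2 ⟨j, Finset.mem_filter.2 ⟨hj, hc'⟩, rfl⟩)
        · exact hagree i h
      rw [this]; ring
    rw [h2, Finset.sum_image (fun a ha b hb hab => hkinj (hES' ha) (hES' hb) hab)]
  have habs : ∀ j ∈ E, |c j| = 2 * |v (k j)| := by
    intro j hj
    have hd : ε (k j) ≠ τ (k j) := (Finset.mem_filter.1 hj).2
    have : |sgn (ε (k j)) - sgn (τ (k j))| = 2 := by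
      cases hb : ε (k j) <;> cases hb' : τ (k j) <;>
        first
          | (rw [hb, hb'] at hd; exact absurd rfl hd)
          | norm_num [sgn]
    rw [hc, abs_mul, this]; ring
  have hbin : ∀ j ∈ E, (2:ℝ)^(-j-1) < |v (k j)| ∧ |v (k j)| ≤ (2:ℝ)^(-j) := by
    intro j hj
    have := hk j (hES' hj)
    simpa [binClass] using this
  set j₀ : ℤ := E.min' hEne with hj₀
  have hj₀E : j₀ ∈ E := E.min'_mem hEne
  have hsplit : Δ = c j₀ + ∑ j ∈ E.erase j₀, c j := by
    rw [hΔeq, Finset.add_sum_erase E c hj₀E]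
  have hlow : |c j₀| - ∑ j ∈ E.erase j₀, |c j| ≤ |Δ| := by
    have h1 : |∑ j ∈ E.erase j₀, c j| ≤ ∑ j ∈ E.erase j₀, |c j| := Finset.abs_sum_le_sum_abs _ _
    have h2 : |c j₀| - |∑ j ∈ E.erase j₀, c j| ≤ |Δ| := by
      rw [hsplit]
      have := abs_add_le (c j₀ + ∑ j ∈ E.erase j₀, c j) (-(∑ j ∈ E.erase j₀, c j))
      simp only [add_neg_cancel_right, abs_neg] at this
      linarith
    linarith
  have hcj₀ : 2 * (2:ℝ)^(-j₀-1) < |c j₀| := by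
    rw [habs j₀ hj₀E]
    have := (hbin j₀ hj₀E).1
    linarith
  rcases (E.erase j₀).eq_empty_or_nonempty with hemp | ⟨jm, hjm⟩
  · have : ∑ j ∈ E.erase j₀, |c j| = 0 := by rw [hemp]; simp
    have hα₀ : α ≤ (2:ℝ)^(-j₀-1) := hα j₀ (hES' hj₀E)
    linarith
  · have hj₀jm : j₀ + 3 ≤ jm := by
      have hjmE := Finset.mem_of_mem_erase hjm
      have : j₀ < jm := lt_of_le_of_ne (E.min'_le jm hjmE) (Ne.symm (Finset.ne_of_mem_erase hjm))
      exact hsp j₀ (hES' hj₀E) jm (hES' hjmE) this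
    have htail : ∑ j ∈ E.erase j₀, |c j| ≤ (2/7) * (2:ℝ)^(-j₀) := by
      have h1 : ∑ j ∈ E.erase j₀, |c j| ≤ ∑ j ∈ E.erase j₀, 2 * (2:ℝ)^(-j) := by
        refine Finset.sum_le_sum fun j hj => ?_
        rw [habs j (Finset.mem_of_mem_erase hj)]
        have := (hbin j (Finset.mem_of_mem_erase hj)).2
        linarith
      have h2 : ∑ j ∈ E.erase j₀, (2:ℝ)^(-j) ≤ (8/7) * (2:ℝ)^(-(j₀+3)) := by
        refine geom_sum_le _ (fun a ha b hb hab =>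
          hsp a (hES' (Finset.mem_of_mem_erase ha)) b (hES' (Finset.mem_of_mem_erase hb)) hab)
          (j₀ + 3) (fun j hj => ?_)
        have hjE := Finset.mem_of_mem_erase hj
        have : j₀ < j := lt_of_le_of_ne (E.min'_le j hjE) (Ne.symm (Finset.ne_of_mem_erase hj))
        exact hsp j₀ (hES' hj₀E) j (hES' hjE) this
      have h3 : (2:ℝ)^(-(j₀+3)) = (2:ℝ)^(-j₀) / 8 := by
        rw [show -(j₀+3) = -j₀ + (-3) by ring, zpow_add₀ (by norm_num : (2:ℝ) ≠ 0),
          show ((2:ℝ))^(-3:ℤ) = 1/8 by norm_num]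
        ring
      have h4 : ∑ j ∈ E.erase j₀, 2 * (2:ℝ)^(-j) = 2 * ∑ j ∈ E.erase j₀, (2:ℝ)^(-j) := by
        rw [Finset.mul_sum]
      calc ∑ j ∈ E.erase j₀, |c j| ≤ ∑ j ∈ E.erase j₀, 2 * (2:ℝ)^(-j) := h1
        _ = 2 * ∑ j ∈ E.erase j₀, (2:ℝ)^(-j) := h4
        _ ≤ 2 * ((8/7) * (2:ℝ)^(-(j₀+3))) := by linarith
        _ = (2/7) * (2:ℝ)^(-j₀) := by rw [h3]; ring
    have hx1 : (2:ℝ)^(-j₀-1) = (2:ℝ)^(-j₀) / 2 := by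
      rw [show -j₀-1 = -j₀ + (-1) by ring, zpow_add₀ (by norm_num : (2:ℝ) ≠ 0),
        show ((2:ℝ))^(-1:ℤ) = 1/2 by norm_num]
      ring
    have hαle : α ≤ (2:ℝ)^(-j₀) / 16 := by
      have ha1 := hα jm (hES' (Finset.mem_of_mem_erase hjm))
      have ha2 : (2:ℝ)^(-jm-1) ≤ (2:ℝ)^(-j₀-4) :=
        zpow_le_zpow_right₀ (by norm_num : (1:ℝ) ≤ 2) (by omega)
      have ha3 : (2:ℝ)^(-j₀-4) = (2:ℝ)^(-j₀)/16 := by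
        rw [show -j₀-4 = -j₀ + (-4) by ring, zpow_add₀ (by norm_num : (2:ℝ) ≠ 0),
          show ((2:ℝ))^(-4:ℤ) = 1/16 by norm_num]
        ring
      linarith
    have hpos : (0:ℝ) < (2:ℝ)^(-j₀) := by positivity
    linarith

/-- Lemma 2.12, part 2: there is an absolute constant `C' > 0` such that
for all `n ≥ 2`, if `‖p‖_∞ ≤ 1/2`, `r ≥ 0` is an integer, and at least `2r·log n`
elements `j` of the binary-decomposition index set `J` of `v` satisfy `2^{-j-1} ≥ α`,
then `Q(α, X_{v,p}) ≤ C' · 2^{-r}`. -/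
theorem stmt_6 :
    ∃ C' : ℝ, 0 < C' ∧
      ∀ (n : ℕ), 2 ≤ n →
        ∀ (v p : Fin n → ℝ), (∀ i, |p i| ≤ 1 / 2) →
          ∀ (r : ℕ) (α : ℝ), 0 < α →
            (∃ S : Finset ℤ, ↑S ⊆ binIdx v ∧ (∀ j ∈ S, α ≤ (2 : ℝ) ^ (-j - 1)) ∧
              2 * r * Real.log n ≤ S.card) →
            levyQLinForm v p α ≤ ENNReal.ofReal (C' / 2 ^ r) := by
  refine ⟨2^46, by positivity, ?_⟩
  intro n hn v p hp r α hαpos ⟨S, hSsub, hSα, hcard⟩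
  by_cases hr : r ≤ 46
  · -- trivial case: measure at most 1
    have hQ : levyQLinForm v p α ≤ 1 := by
      refine iSup_le fun t => ?_
      calc cubeMeasure p {x | |(∑ i, v i * x i) - t| < α}
          ≤ cubeMeasure p Set.univ := measure_mono (Set.subset_univ _)
        _ = 1 := cubeMeasure_univ p hp
    refine hQ.trans ?_
    have h1 : (1:ℝ) ≤ 2^46 / 2^r := by
      rw [le_div_iff₀ (by positivity)]
      rw [one_mul]
      exact pow_le_pow_right₀ (by norm_num) hr
    exact ENNReal.one_le_ofReal.2 h1
  · push_neg at hr
    set m := S.card with hm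
    -- choice function for classes
    have hex : ∀ j ∈ S, (binClass v j).Nonempty := fun j hj => hSsub hj
    set k : ℤ → Fin n := fun j =>
      if h : (binClass v j).Nonempty then h.choose else ⟨0, by omega⟩ with hk
    have hkmem : ∀ j ∈ S, k j ∈ binClass v j := fun j hj => by
      simp only [hk]; rw [dif_pos (hex j hj)]; exact (hex j hj).choose_spec
    have hkinjS : Set.InjOn k S := fun a ha b hb hab =>
      binClass_disjoint v (hkmem a ha) (hab ▸ hkmem b hb)
    have hmn : m ≤ n := by
      have := Finset.card_le_card_of_injOn k (fun a _ => Finset.mem_univ (k a)) hkinjS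
      simpa using this
    -- numeric facts
    have hlog2 : (0.6931471803:ℝ) < Real.log 2 := Real.log_two_gt_d9
    have hlogn2 : Real.log 2 ≤ Real.log n :=
      Real.log_le_log (by norm_num) (by exact_mod_cast hn)
    have hml : 2 * (r:ℝ) * Real.log n ≤ (m:ℝ) := by exact_mod_cast hcard
    have hr47 : (47:ℝ) ≤ (r:ℝ) := by exact_mod_cast hr
    have hm64 : (64:ℝ) < (m:ℝ) := by nlinarith
    have hn64 : (64:ℝ) ≤ (n:ℝ) := by
      have : (m:ℝ) ≤ (n:ℝ) := by exact_mod_cast hmn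
      linarith
    have hlog64 : Real.log 64 = 6 * Real.log 2 := by
      rw [show (64:ℝ) = 2^6 by norm_num, Real.log_pow]
      push_cast; ring
    have hlogn6 : 6 * Real.log 2 ≤ Real.log n := by
      rw [← hlog64]
      exact Real.log_le_log (by norm_num) hn64
    -- spaced subset
    obtain ⟨S', hS'S, hS'card, hS'sp⟩ := exists_spaced_subset S
    set T := S'.image k with hT
    have hTcard : T.card = S'.card :=
      Finset.card_image_of_injOn (fun a ha b hb hab =>
        hkinjS (hS'S ha) (hS'S hb) hab)
    -- measure bound for each shift t
    have hbound : ∀ t : ℝ, cubeMeasure p {x | |(∑ i, v i * x i) - t| < α}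
        ≤ ENNReal.ofReal (3/4) ^ T.card := by
      intro t
      have hfmeas : Measurable fun x : Fin n → ℝ => ∑ i, v i * x i :=
        Finset.measurable_sum _ (fun i _ => measurable_const.mul (measurable_pi_apply i))
      have hmeas : MeasurableSet {x : Fin n → ℝ | |(∑ i, v i * x i) - t| < α} := by
        have : {x : Fin n → ℝ | |(∑ i, v i * x i) - t| < α} =
            (fun x : Fin n → ℝ => |(∑ i, v i * x i) - t|) ⁻¹' Set.Iio α := rfl
        rw [this]
        exact ((hfmeas.sub measurable_const).abs) measurableSet_Iio
      refine cubeMeasure_apply_le p hp _ hmeas T fun ε τ hε hτ hag => ?_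
      exact uniq_on_window v α t S' hS'sp (fun j hj => hSα j (hS'S hj)) k
        (fun j hj => hkmem j (hS'S hj))
        (fun a ha b hb hab => hkinjS (hS'S ha) (hS'S hb) hab)
        ε τ hε hτ hag
    refine iSup_le fun t => (hbound t).trans ?_
    -- final arithmetic
    rw [hTcard, hS'card, ← hm]
    set m' := (m + 2) / 3 with hm'
    have hm'3 : (m:ℝ) ≤ 3 * (m':ℝ) := by
      have : m ≤ 3 * m' := by omega
      exact_mod_cast this
    have hkey : (r:ℝ) * Real.log 2 ≤ (m':ℝ) / 4 := by
      have h1 : 2 * (r:ℝ) * (6 * Real.log 2) ≤ 2 * (r:ℝ) * Real.log n := by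
        have hr0 : (0:ℝ) ≤ 2 * (r:ℝ) := by positivity
        exact mul_le_mul_of_nonneg_left hlogn6 hr0
      linarith
    have hlog34 : Real.log (3/4) ≤ -(1/4) := by
      have := Real.log_le_sub_one_of_pos (by norm_num : (0:ℝ) < 3/4)
      linarith
    have hmain : ((3:ℝ)/4) ^ m' ≤ (1/2) ^ r := by
      have hlhs : (0:ℝ) < (3/4:ℝ) ^ m' := by positivity
      have hrhs : (0:ℝ) < (1/2:ℝ) ^ r := by positivity
      rw [← Real.log_le_log_iff hlhs hrhs, Real.log_pow, Real.log_pow]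
      have h12 : Real.log (1/2) = -Real.log 2 := by
        rw [one_div, Real.log_inv]
      rw [h12]
      have hm'0 : (0:ℝ) ≤ (m':ℝ) := by positivity
      nlinarith [hlog34, hkey, hm'0]
    rw [← ENNReal.ofReal_pow (by norm_num : (0:ℝ) ≤ 3/4)]
    refine ENNReal.ofReal_le_ofReal ?_
    calc ((3:ℝ)/4) ^ m' ≤ (1/2) ^ r := hmain
      _ = 1 / 2 ^ r := by rw [div_pow, one_pow]
      _ ≤ 2 ^ 46 / 2 ^ r := by gcongr <;> norm_num
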